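/- The projection Π is Lipschitz from the sup norm to the μ-norm with constant φ_max² · σ_max: for all q, p : X × A → ℝ, ‖Π q − Π p‖_μ ≤ φ_max² · σ_max · ‖q − p‖_∞. -/

import Mathlib

open Finset Matrix

variable {X A : Type*}

noncomputable def bellman [Fintype X] [Fintype A] [Nonempty A]
    (P : X → A → X → ℝ) (r : X × A → ℝ) (γ : ℝ) (q : X × A → ℝ) :
    X × A → ℝ :=
  fun z => r z + γ * ∑ x' : X, P z.1 z.2 x' *
    Finset.univ.sup' Finset.univ_nonempty (fun a' : A => q (x', a'))

noncomputable def supNorm [Fintype X] [Fintype A] [Nonempty X] [Nonempty A]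
    (q : X × A → ℝ) : ℝ :=
  Finset.univ.sup' Finset.univ_nonempty (fun z : X × A => |q z|)

noncomputable def munorm [Fintype X] [Fintype A] (μ q : X × A → ℝ) : ℝ :=
  Real.sqrt (∑ z : X × A, μ z * q z ^ 2)

def qlin {k : ℕ} (φ : X × A → Fin k → ℝ) (ω : Fin k → ℝ) : X × A → ℝ :=
  fun z => φ z ⬝ᵥ ω

noncomputable def cov [Fintype X] [Fintype A] {k : ℕ}
    (μ : X × A → ℝ) (φ : X × A → Fin k → ℝ) : Matrix (Fin k) (Fin k) ℝ :=
  ∑ z : X × A, μ z • Matrix.vecMulVec (φ z) (φ z)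

noncomputable def proj [Fintype X] [Fintype A] {k : ℕ}
    (μ : X × A → ℝ) (φ : X × A → Fin k → ℝ) (q : X × A → ℝ) : X × A → ℝ :=
  fun z => φ z ⬝ᵥ (cov μ φ)⁻¹.mulVec (∑ z' : X × A, (μ z' * q z') • φ z')

noncomputable def enorm2 {k : ℕ} (v : Fin k → ℝ) : ℝ :=
  Real.sqrt (∑ i, v i ^ 2)

noncomputable def phiMax [Fintype X] [Fintype A] [Nonempty X] [Nonempty A]
    {k : ℕ} (φ : X × A → Fin k → ℝ) : ℝ :=
  Finset.univ.sup' Finset.univ_nonempty (fun z : X × A => enorm2 (φ z))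

noncomputable def sigmaMax {k : ℕ} (M : Matrix (Fin k) (Fin k) ℝ) : ℝ :=
  ‖LinearMap.toContinuousLinearMap (Matrix.toEuclideanLin M)‖

noncomputable def gmap [Fintype X] [Fintype A] [Nonempty A] {k : ℕ}
    (P : X → A → X → ℝ) (r : X × A → ℝ) (γ : ℝ)
    (μ : X × A → ℝ) (φ : X × A → Fin k → ℝ) (n : ℕ) (ω : Fin k → ℝ) :
    Fin k → ℝ :=
  ∑ z : X × A, (μ z * ((bellman P r γ)^[n] (qlin φ ω) z - qlin φ ω z)) • φ z


section aux
open Finset Matrix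

private lemma enorm2_eq' {k : ℕ} (v : Fin k → ℝ) :
    enorm2 v = ‖(WithLp.equiv 2 (Fin k → ℝ)).symm v‖ := by
  rw [EuclideanSpace.norm_eq, enorm2]
  congr 1; apply Finset.sum_congr rfl; intro i _
  simp [sq_abs]

private lemma enorm2_nonneg' {k : ℕ} (v : Fin k → ℝ) : 0 ≤ enorm2 v := Real.sqrt_nonneg _

private lemma dot_le' {k : ℕ} (u v : Fin k → ℝ) : |u ⬝ᵥ v| ≤ enorm2 u * enorm2 v := by
  rw [enorm2_eq', enorm2_eq']
  have h := abs_real_inner_le_norm ((WithLp.equiv 2 (Fin k → ℝ)).symm u)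
      ((WithLp.equiv 2 (Fin k → ℝ)).symm v)
  have he : (inner ℝ ((WithLp.equiv 2 (Fin k → ℝ)).symm u)
      ((WithLp.equiv 2 (Fin k → ℝ)).symm v) : ℝ) = u ⬝ᵥ v := by
    simp [PiLp.inner_apply, dotProduct, RCLike.inner_apply, mul_comm]
  rwa [he] at h

private lemma mulVec_enorm_le {k : ℕ} (M : Matrix (Fin k) (Fin k) ℝ) (v : Fin k → ℝ) :
    enorm2 (M.mulVec v) ≤ sigmaMax M * enorm2 v := by
  rw [enorm2_eq', enorm2_eq']
  have h := (LinearMap.toContinuousLinearMap (Matrix.toEuclideanLin M)).le_opNorm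
      ((WithLp.equiv 2 (Fin k → ℝ)).symm v)
  have he : (LinearMap.toContinuousLinearMap (Matrix.toEuclideanLin M))
      ((WithLp.equiv 2 (Fin k → ℝ)).symm v)
      = (WithLp.equiv 2 (Fin k → ℝ)).symm (M.mulVec v) := rfl
  rw [he] at h
  exact h

private lemma enorm2_sum_le {k : ℕ} {ι : Type*} (s : Finset ι) (c : ι → ℝ)
    (f : ι → Fin k → ℝ) :
    enorm2 (∑ i ∈ s, c i • f i) ≤ ∑ i ∈ s, |c i| * enorm2 (f i) := by
  have key : ∀ i ∈ s, (WithLp.equiv 2 (Fin k → ℝ)).symm (c i • f i)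
      = c i • (WithLp.equiv 2 (Fin k → ℝ)).symm (f i) := fun i _ => rfl
  rw [enorm2_eq']
  have hsum : (WithLp.equiv 2 (Fin k → ℝ)).symm (∑ i ∈ s, c i • f i)
      = ∑ i ∈ s, c i • (WithLp.equiv 2 (Fin k → ℝ)).symm (f i) := by
    ext j; simp [Finset.sum_apply]
  rw [hsum]
  refine (norm_sum_le _ _).trans ?_
  apply Finset.sum_le_sum
  intro i hi
  rw [norm_smul, enorm2_eq']
  simp [Real.norm_eq_abs]

end aux

theorem projection_lipschitz
    [Fintype X] [Fintype A] [Nonempty X] [Nonempty A] {k : ℕ}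
    (φ : X × A → Fin k → ℝ) (μ : X × A → ℝ) (μmin : ℝ)
    (hμmin : 0 < μmin) (hμ : ∀ z, μmin ≤ μ z) (hμ1 : ∑ z : X × A, μ z = 1)
    (hSig : IsUnit (cov μ φ).det)
    (q p : X × A → ℝ) :
    munorm μ (proj μ φ q - proj μ φ p) ≤
      phiMax φ ^ 2 * sigmaMax (cov μ φ)⁻¹ * supNorm (q - p) := by
  classical
  set r : X × A → ℝ := q - p with hr
  set M := (cov μ φ)⁻¹ with hM
  set w : Fin k → ℝ := ∑ z' : X × A, (μ z' * r z') • φ z' with hw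
  have hμ0 : ∀ z, (0:ℝ) ≤ μ z := fun z => le_trans hμmin.le (hμ z)
  have habs : ∀ z, |r z| ≤ supNorm r := fun z =>
    Finset.le_sup' (fun z => |r z|) (Finset.mem_univ z)
  have hsup0 : 0 ≤ supNorm r :=
    le_trans (abs_nonneg _) (habs (Classical.arbitrary _))
  have hphile : ∀ z, enorm2 (φ z) ≤ phiMax φ := fun z =>
    Finset.le_sup' (fun z => enorm2 (φ z)) (Finset.mem_univ z)
  have hphi0 : 0 ≤ phiMax φ :=
    le_trans (enorm2_nonneg' _) (hphile (Classical.arbitrary _))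
  have hsig0 : 0 ≤ sigmaMax M := norm_nonneg _
  have hwle : enorm2 w ≤ phiMax φ * supNorm r := by
    refine (enorm2_sum_le _ _ _).trans ?_
    calc ∑ z' : X × A, |μ z' * r z'| * enorm2 (φ z')
        ≤ ∑ z' : X × A, μ z' * (supNorm r * phiMax φ) := by
          apply Finset.sum_le_sum; intro z _
          rw [abs_mul, abs_of_nonneg (hμ0 z), mul_assoc]
          exact mul_le_mul_of_nonneg_left
            (mul_le_mul (habs z) (hphile z) (enorm2_nonneg' _) hsup0) (hμ0 z)
      _ = phiMax φ * supNorm r := by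
          rw [← Finset.sum_mul, hμ1, one_mul, mul_comm]
  have hpt : ∀ z, |(proj μ φ q - proj μ φ p) z| ≤ phiMax φ ^ 2 * sigmaMax M * supNorm r := by
    intro z
    have heq : (proj μ φ q - proj μ φ p) z = φ z ⬝ᵥ M.mulVec w := by
      have hsum : (∑ z' : X × A, (μ z' * q z') • φ z')
          - (∑ z' : X × A, (μ z' * p z') • φ z') = w := by
        rw [hw, ← Finset.sum_sub_distrib]
        apply Finset.sum_congr rfl; intro z' _
        rw [← sub_smul, ← mul_sub]
        rfl
      simp only [Pi.sub_apply, proj, ← dotProduct_sub, ← Matrix.mulVec_sub, ← hM, hsum]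
    rw [heq]
    calc |φ z ⬝ᵥ M.mulVec w| ≤ enorm2 (φ z) * enorm2 (M.mulVec w) := dot_le' _ _
      _ ≤ phiMax φ * (sigmaMax M * (phiMax φ * supNorm r)) :=
          mul_le_mul (hphile z)
            ((mulVec_enorm_le _ _).trans (mul_le_mul_of_nonneg_left hwle hsig0))
            (enorm2_nonneg' _) hphi0
      _ = phiMax φ ^ 2 * sigmaMax M * supNorm r := by ring
  set c := phiMax φ ^ 2 * sigmaMax M * supNorm r with hc
  have hc0 : 0 ≤ c := mul_nonneg (mul_nonneg (pow_nonneg hphi0 2) hsig0) hsup0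
  have hsumle : ∑ z : X × A, μ z * (proj μ φ q - proj μ φ p) z ^ 2 ≤ c ^ 2 := by
    calc ∑ z : X × A, μ z * (proj μ φ q - proj μ φ p) z ^ 2
        ≤ ∑ z : X × A, μ z * c ^ 2 := by
          apply Finset.sum_le_sum; intro z _
          refine mul_le_mul_of_nonneg_left ?_ (hμ0 z)
          have h2 := pow_le_pow_left₀ (abs_nonneg _) (hpt z) 2
          rwa [sq_abs] at h2
      _ = c ^ 2 := by rw [← Finset.sum_mul, hμ1, one_mul]
  calc munorm μ (proj μ φ q - proj μ φ p)
      ≤ Real.sqrt (c ^ 2) := Real.sqrt_le_sqrt hsumle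
    _ = c := Real.sqrt_sq hc0
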